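/- The function r ↦ (√((r+1)(r+5)) − (r+1))/2 is strictly increasing on [0, ∞) and tends to 1 as r → ∞. -/

import Mathlib

open Real Filter

lemma key_eq (r : ℝ) (hr : 0 < r + 1) :
    (Real.sqrt ((r+1)*(r+5)) - (r+1))/2 = 2 / (Real.sqrt (1 + 4/(r+1)) + 1) := by
  have h1 : (r+1)*(r+5) = (r+1)^2 * (1 + 4/(r+1)) := by field_simp; ring
  have h2 : Real.sqrt ((r+1)*(r+5)) = (r+1) * Real.sqrt (1 + 4/(r+1)) := by
    rw [h1, Real.sqrt_mul (sq_nonneg _), Real.sqrt_sq hr.le]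
  have ht : (0:ℝ) ≤ 1 + 4/(r+1) := by positivity
  have hs : Real.sqrt (1 + 4/(r+1)) ^ 2 = 1 + 4/(r+1) := Real.sq_sqrt ht
  have hd : (0:ℝ) < Real.sqrt (1 + 4/(r+1)) + 1 := by positivity
  rw [h2, div_eq_div_iff (by norm_num) hd.ne']
  have h4 : (r+1) * (4/(r+1)) = 4 := by field_simp
  linear_combination (r+1)*hs + h4

/-- r ↦ (√((r+1)(r+5)) − (r+1))/2 is strictly increasing on [0,∞) and tends to 1 as r → ∞. -/
theorem stmt1 :
    StrictMonoOn (fun r : ℝ => (Real.sqrt ((r+1)*(r+5)) - (r+1))/2) (Set.Ici 0) ∧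
    Filter.Tendsto (fun r : ℝ => (Real.sqrt ((r+1)*(r+5)) - (r+1))/2)
      Filter.atTop (nhds 1) := by
  constructor
  · intro a ha b hb hab
    have ha0 : (0:ℝ) ≤ a := ha
    have hb0 : (0:ℝ) ≤ b := hb
    have ha1 : (0:ℝ) < a + 1 := by linarith
    have hb1 : (0:ℝ) < b + 1 := by linarith
    simp only
    rw [key_eq a ha1, key_eq b hb1]
    have h4 : 4/(b+1) < 4/(a+1) :=
      div_lt_div_of_pos_left (by norm_num) ha1 (by linarith)
    have hsq : Real.sqrt (1 + 4/(b+1)) < Real.sqrt (1 + 4/(a+1)) :=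
      Real.sqrt_lt_sqrt (by positivity) (by linarith)
    exact div_lt_div_of_pos_left (by norm_num) (by positivity) (by linarith)
  · have h1 : Tendsto (fun r : ℝ => 4/(r+1)) atTop (nhds 0) :=
      Tendsto.div_atTop tendsto_const_nhds (tendsto_atTop_add_const_right _ 1 tendsto_id)
    have h2 : Tendsto (fun r : ℝ => 1 + 4/(r+1)) atTop (nhds 1) := by
      simpa using h1.const_add 1
    have h3 : Tendsto (fun r : ℝ => Real.sqrt (1 + 4/(r+1)) + 1) atTop (nhds 2) := by
      have := (Real.continuous_sqrt.tendsto 1).comp h2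
      have h4 : Tendsto (fun r : ℝ => Real.sqrt (1 + 4/(r+1))) atTop (nhds 1) := by
        simpa [Function.comp_def] using this
      simpa [one_add_one_eq_two] using h4.add_const 1
    have h5 : Tendsto (fun r : ℝ => 2 / (Real.sqrt (1 + 4/(r+1)) + 1)) atTop (nhds 1) := by
      have := (tendsto_const_nhds (x := (2:ℝ))).div h3 (two_ne_zero)
      norm_num at this
      exact this
    refine h5.congr' ?_
    filter_upwards [eventually_ge_atTop (0:ℝ)] with r hr
    exact (key_eq r (by linarith)).symm
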